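/- Let Q ≥ 2 and let π ∈ [0,1]^Q with Σ_{q=1}^Q π_q = 1; set s_k = Σ_{q=1}^Q π_q^k. Then: (i) if π_q > 0 for at least two values of q, then −2 s_2³ + 3 s_2 s_3 − s_3 ≠ 0; (ii) s_3 − s_2² = 0 if, and only if, π is uniform on its support, i.e. there is a constant c such that every π_q is either 0 or c. (In general s_3 ≥ s_2² by the Cauchy–Schwarz inequality.) -/

import Mathlib

open Finset

set_option maxHeartbeats 1000000 in
/-- For a probability vector `π` with power sums `s_k = ∑ π_q^k`: (i) if at least two
entries of `π` are positive then `-2s₂³ + 3s₂s₃ - s₃ ≠ 0`; (ii) `s₃ - s₂² = 0` if and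
only if `π` is uniform on its support. -/
theorem power_sums_lemma
    (Q : ℕ) (hQ : 2 ≤ Q) (π : Fin Q → ℝ)
    (hπ : ∀ q, π q ∈ Set.Icc (0 : ℝ) 1) (hπsum : ∑ q, π q = 1) :
    ((∃ q l : Fin Q, q ≠ l ∧ 0 < π q ∧ 0 < π l) →
      -2 * (∑ q, π q ^ 2) ^ 3 + 3 * (∑ q, π q ^ 2) * (∑ q, π q ^ 3)
        - (∑ q, π q ^ 3) ≠ 0) ∧
    ((∑ q, π q ^ 3) - (∑ q, π q ^ 2) ^ 2 = 0 ↔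
      ∃ c : ℝ, ∀ q, π q = 0 ∨ π q = c) := by
  have hnn : ∀ q, 0 ≤ π q := fun q => (hπ q).1
  have hle1 : ∀ q, π q ≤ 1 := fun q => (hπ q).2
  -- key identity
  have key : ∑ q, ∑ l, π q * π l * (π q - π l)^2
      = 2 * ((∑ q, π q ^ 3) - (∑ q, π q ^ 2)^2) := by
    have h1 : ∑ q, ∑ l, π q * π l * (π q - π l)^2
        = ∑ q, (π q^3 * (∑ l, π l) + π q * (∑ l, π l^3) - (2*π q^2) * (∑ l, π l^2)) := by
      refine Finset.sum_congr rfl fun q _ => ?_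
      rw [Finset.mul_sum, Finset.mul_sum, Finset.mul_sum, ← Finset.sum_add_distrib,
        ← Finset.sum_sub_distrib]
      exact Finset.sum_congr rfl fun l _ => by ring
    rw [h1]
    rw [Finset.sum_sub_distrib, Finset.sum_add_distrib, ← Finset.sum_mul, ← Finset.sum_mul,
      ← Finset.sum_mul, hπsum]
    ring_nf
    rw [show (∑ x, π x ^ 2 * 2) = (∑ x, π x ^ 2) * 2 from (Finset.sum_mul _ _ _).symm]
    ring
  have termnn : ∀ q l : Fin Q, 0 ≤ π q * π l * (π q - π l)^2 := fun q l =>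
    mul_nonneg (mul_nonneg (hnn q) (hnn l)) (sq_nonneg _)
  have keynn : 0 ≤ ∑ q, ∑ l, π q * π l * (π q - π l)^2 :=
    Finset.sum_nonneg fun q _ => Finset.sum_nonneg fun l _ => termnn q l
  have hs3ge : (∑ q, π q ^ 2)^2 ≤ ∑ q, π q ^ 3 := by
    rw [key] at keynn; linarith
  constructor
  · rintro ⟨q, l, hne, hq, hl⟩
    set s2 := ∑ x, π x ^ 2 with hs2def
    set s3 := ∑ x, π x ^ 3 with hs3def
    -- s2 > 0
    have hs2pos : 0 < s2 := by
      have h1 : π q ^ 2 ≤ s2 :=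
        Finset.single_le_sum (f := fun x => π x ^ 2) (fun i _ => sq_nonneg _) (mem_univ q)
      nlinarith
    -- π q < 1
    have hql : π q + π l ≤ 1 := by
      have hsub : ({q, l} : Finset (Fin Q)) ⊆ univ := subset_univ _
      have := Finset.sum_le_sum_of_subset_of_nonneg hsub (fun i _ _ => hnn i)
      rw [Finset.sum_pair hne, hπsum] at this
      exact this
    have hq1 : π q < 1 := by linarith
    -- s2 < 1
    have hs2lt : s2 < 1 := by
      rw [← hπsum]
      apply Finset.sum_lt_sum (fun i _ => by nlinarith [hnn i, hle1 i])
      exact ⟨q, mem_univ q, by nlinarith⟩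
    -- s3 ≤ sqrt s2 * s2
    set t := Real.sqrt s2 with htdef
    have ht0 : 0 ≤ t := Real.sqrt_nonneg _
    have ht2 : t^2 = s2 := Real.sq_sqrt hs2pos.le
    have htpos : 0 < t := by nlinarith
    have htlt : t < 1 := by nlinarith
    have hs3le : s3 ≤ t * s2 := by
      have : ∀ i : Fin Q, π i ^ 3 ≤ t * π i ^ 2 := by
        intro i
        have h1 : π i ^ 2 ≤ s2 :=
          Finset.single_le_sum (f := fun x => π x ^ 2) (fun j _ => sq_nonneg _) (mem_univ i)
        have h2 : π i ≤ t := by nlinarith [hnn i]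
        nlinarith [sq_nonneg (π i)]
      calc s3 ≤ ∑ i, t * π i ^ 2 := Finset.sum_le_sum fun i _ => this i
        _ = t * s2 := by rw [← Finset.mul_sum]
    -- conclude
    intro habs
    rcases le_or_gt (3 * s2) 1 with hc | hc
    · nlinarith [mul_nonneg (by linarith : (0:ℝ) ≤ 1 - 3*s2) (by linarith : (0:ℝ) ≤ s3 - s2^2),
        mul_pos (mul_pos hs2pos hs2pos) (by linarith : (0:ℝ) < 1 - s2)]
    · have hs3le' : s3 ≤ t^3 := by nlinarith
      have habs' : 2*t^6 = (3*t^2-1)*s3 := by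
        linear_combination (-1)*habs + (2*(t^4+t^2*s2+s2^2)-3*s3)*ht2
      have h2 : 2*t^6 ≤ (3*t^2-1)*t^3 := by
        nlinarith [mul_nonneg (show (0:ℝ) ≤ 3*t^2-1 by nlinarith)
          (show (0:ℝ) ≤ t^3 - s3 by linarith)]
      have h3 : 0 < t^3 * ((1-t)^2 * (2*t+1)) :=
        mul_pos (pow_pos htpos 3) (mul_pos (pow_pos (by linarith) 2) (by linarith))
      nlinarith [h2, h3]
  · constructor
    · intro h
      have hzero : ∑ q, ∑ l, π q * π l * (π q - π l)^2 = 0 := by rw [key, h]; ring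
      have hterm : ∀ q l : Fin Q, π q * π l * (π q - π l)^2 = 0 := by
        intro q l
        have h1 := (Finset.sum_eq_zero_iff_of_nonneg
          (fun i _ => Finset.sum_nonneg fun j _ => termnn i j)).mp hzero q (mem_univ q)
        exact (Finset.sum_eq_zero_iff_of_nonneg (fun j _ => termnn q j)).mp h1 l (mem_univ l)
      obtain ⟨q0, hq0⟩ : ∃ q0, 0 < π q0 := by
        by_contra hc
        push_neg at hc
        have : ∑ q, π q = 0 :=
          Finset.sum_eq_zero fun i _ => le_antisymm (hc i) (hnn i)
        rw [hπsum] at this; norm_num at this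
      refine ⟨π q0, fun q => ?_⟩
      rcases eq_or_lt_of_le (hnn q) with h0 | hpos
      · exact Or.inl h0.symm
      · right
        have := hterm q q0
        have hne : (π q - π q0)^2 = 0 := by
          rcases mul_eq_zero.mp this with h' | h'
          · exact absurd h' (by positivity)
          · exact h'
        have := pow_eq_zero_iff (n := 2) (by norm_num) |>.mp hne
        linarith
    · rintro ⟨c, hc⟩
      have hzero : ∑ q, ∑ l, π q * π l * (π q - π l)^2 = 0 :=
        Finset.sum_eq_zero fun q _ => Finset.sum_eq_zero fun l _ => by
          rcases hc q with h1 | h1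
          · rw [h1]; ring
          · rcases hc l with h2 | h2
            · rw [h2]; ring
            · rw [h1, h2]; ring
      rw [hzero] at key; linarith
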